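/- Let r > 1 be real, let K be a number field, and let d be an r-mighty norm of K. Then for every nonzero integral ideal I of 𝓞_K, the value σ_{r,K}(I) does not lie in the open interval ( ∏_{𝔭 prime, N(𝔭) > d} (1 − N(𝔭)^{-r})^{-1}, 1 + d^{-r} ); indeed, if some prime ideal 𝔮 with N(𝔮) ≤ d divides I then σ_{r,K}(I) ≥ 1 + d^{-r}, and otherwise σ_{r,K}(I) ≤ ∏_{N(𝔭) > d} (1 − N(𝔭)^{-r})^{-1}. -/

import Mathlib

open NumberField

/-- The ideal divisor function `σ_{r,K}(I) = ∑_{J ∣ I} N(J)^{-r}`. -/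
noncomputable def sigmaK (K : Type*) [Field K] [NumberField K] (r : ℝ)
    (I : Ideal (𝓞 K)) : ℝ :=
  ∑' J : {J : Ideal (𝓞 K) // J ∣ I}, (Ideal.absNorm (J : Ideal (𝓞 K)) : ℝ) ^ (-r)

/-- `d > 1` is an `r`-mighty norm of `K` if `d` is the norm of some nonzero prime ideal of
`𝓞_K` and `1 + d^{-r} > ∏_{𝔭 prime, N(𝔭) > d} (1 − N(𝔭)^{-r})⁻¹`. -/
def IsMightyNorm (K : Type*) [Field K] [NumberField K] (r : ℝ) (d : ℕ) : Prop :=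
  1 < d ∧ (∃ P : Ideal (𝓞 K), P.IsPrime ∧ P ≠ ⊥ ∧ Ideal.absNorm P = d) ∧
    ∏' P : {P : Ideal (𝓞 K) // P.IsPrime ∧ d < Ideal.absNorm P},
        (1 - (Ideal.absNorm (P : Ideal (𝓞 K)) : ℝ) ^ (-r))⁻¹
      < 1 + (d : ℝ) ^ (-r)

section Aux

open UniqueFactorizationMonoid

lemma aux_prod_mono {ι : Type*} (f : ι → ℝ) (h1 : ∀ i, 1 ≤ f i) {s t : Finset ι}
    (hst : s ⊆ t) : ∏ i ∈ s, f i ≤ ∏ i ∈ t, f i := by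
  classical
  rw [← Finset.prod_sdiff hst]
  have hs : 0 ≤ ∏ i ∈ s, f i := Finset.prod_nonneg fun i _ => le_trans zero_le_one (h1 i)
  have ht : 1 ≤ ∏ i ∈ t \ s, f i := by
    calc (1 : ℝ) = ∏ _i ∈ t \ s, 1 := (Finset.prod_const_one).symm
    _ ≤ ∏ i ∈ t \ s, f i :=
      Finset.prod_le_prod (fun _ _ => zero_le_one) (fun i _ => h1 i)
  exact le_mul_of_one_le_left hs ht

/-- Monotone bounded partial products converge (for real factors `≥ 1`). -/
lemma aux_hasProd {ι : Type*} (f : ι → ℝ) (h1 : ∀ i, 1 ≤ f i) (C : ℝ)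
    (hC : ∀ s : Finset ι, ∏ i ∈ s, f i ≤ C) :
    HasProd f (⨆ s : Finset ι, ∏ i ∈ s, f i) ∧
      BddAbove (Set.range fun s : Finset ι => ∏ i ∈ s, f i) := by
  have hmono : Monotone (fun s : Finset ι => ∏ i ∈ s, f i) := fun s t hst =>
    aux_prod_mono f h1 hst
  have hbdd : BddAbove (Set.range fun s : Finset ι => ∏ i ∈ s, f i) := by
    refine ⟨C, ?_⟩
    rintro x ⟨s, rfl⟩
    exact hC s
  exact ⟨tendsto_atTop_ciSup hmono hbdd, hbdd⟩

variable {K : Type*} [Field K] [NumberField K]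

/-- A nonzero prime ideal has norm at least 2. -/
lemma aux_two {P : Ideal (𝓞 K)} (hP : P.IsPrime) (h0 : P ≠ ⊥) :
    2 ≤ Ideal.absNorm P := by
  have h1 : Ideal.absNorm P ≠ 0 := by
    simpa [Ideal.absNorm_eq_zero_iff] using h0
  have h2 : Ideal.absNorm P ≠ 1 := by
    simpa [Ideal.absNorm_eq_one_iff] using hP.ne_top
  omega

lemma aux_two' {d : ℕ} (P : {P : Ideal (𝓞 K) // P.IsPrime ∧ d < Ideal.absNorm P}) :
    2 ≤ Ideal.absNorm (P : Ideal (𝓞 K)) := by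
  refine aux_two P.2.1 ?_
  intro hbot
  have h0 : Ideal.absNorm (P : Ideal (𝓞 K)) = 0 := by rw [hbot, Ideal.absNorm_bot]
  have := P.2.2
  omega

/-- Fiber counting: there are at most `finrank ℤ (𝓞 K)` prime ideals of a given norm `m ≥ 2`. -/
lemma aux_card (m : ℕ) (hm : 2 ≤ m) (u : Finset (Ideal (𝓞 K)))
    (hu : ∀ P ∈ u, P.IsPrime ∧ Ideal.absNorm P = m) :
    u.card ≤ Module.finrank ℤ (𝓞 K) := by
  classical
  have hprime : ∀ P ∈ u, Prime P := by
    intro P hP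
    refine (Ideal.prime_iff_isPrime ?_).2 (hu P hP).1
    intro hbot
    have h0 : Ideal.absNorm P = 0 := by rw [hbot, Ideal.absNorm_bot]
    have h1 := (hu P hP).2
    omega
  have hdvd : ∀ P ∈ u, P ∣ Ideal.span {(m : 𝓞 K)} := by
    intro P hP
    rw [Ideal.dvd_span_singleton]
    have := Ideal.absNorm_mem P
    rwa [(hu P hP).2] at this
  have h2 := map_dvd Ideal.absNorm (Finset.prod_primes_dvd _ hprime hdvd)
  rw [map_prod, Finset.prod_congr rfl (fun P hP => (hu P hP).2), Finset.prod_const,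
    Ideal.absNorm_span_singleton] at h2
  rw [show ((m : ℕ) : 𝓞 K) = algebraMap ℤ (𝓞 K) (m : ℤ) from (map_natCast _ m).symm,
    Algebra.norm_algebraMap_of_basis (Module.Free.chooseBasis ℤ (𝓞 K)),
    Int.natAbs_pow] at h2
  simp only [Int.natAbs_natCast] at h2
  have := (Nat.pow_dvd_pow_iff_le_right hm).1 h2
  rwa [Module.finrank_eq_card_chooseBasisIndex ℤ (𝓞 K)]

/-- Summability of the prime norm series. -/
lemma aux_summable {r : ℝ} (hr : 1 < r) (d : ℕ) :
    Summable (fun P : {P : Ideal (𝓞 K) // P.IsPrime ∧ d < Ideal.absNorm P} =>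
      (Ideal.absNorm (P : Ideal (𝓞 K)) : ℝ) ^ (-r)) := by
  classical
  set n := Module.finrank ℤ (𝓞 K) with hn
  have hsum : Summable (fun m : ℕ => (m : ℝ) ^ (-r)) :=
    Real.summable_nat_rpow.2 (by linarith)
  apply summable_of_sum_le (c := (n : ℝ) * ∑' m : ℕ, (m : ℝ) ^ (-r))
  · intro P
    exact Real.rpow_nonneg (by positivity) _
  · intro u
    have hmaps : ∀ P ∈ u, Ideal.absNorm (P : Ideal (𝓞 K)) ∈
        u.image (fun P : {P : Ideal (𝓞 K) // P.IsPrime ∧ d < Ideal.absNorm P} =>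
          Ideal.absNorm (P : Ideal (𝓞 K))) :=
      fun P hP => Finset.mem_image_of_mem _ hP
    rw [← Finset.sum_fiberwise_of_maps_to hmaps]
    have key : ∀ m ∈ u.image (fun P : {P : Ideal (𝓞 K) // P.IsPrime ∧ d < Ideal.absNorm P} =>
        Ideal.absNorm P.val),
        ∑ P ∈ u.filter (fun P => Ideal.absNorm P.val = m),
          (Ideal.absNorm P.val : ℝ) ^ (-r) ≤ (n : ℝ) * (m : ℝ) ^ (-r) := by
      intro m hm
      rw [Finset.sum_congr rfl (fun P hP => by
        rw [(Finset.mem_filter.1 hP).2]), Finset.sum_const, nsmul_eq_mul]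
      have hcard : (u.filter (fun P => Ideal.absNorm P.val = m)).card ≤ n := by
        obtain ⟨P₀, _, hP₀⟩ := Finset.mem_image.1 hm
        have hm2 : 2 ≤ m := hP₀ ▸ aux_two' P₀
        have hinj : Function.Injective
            (fun P : {P : Ideal (𝓞 K) // P.IsPrime ∧ d < Ideal.absNorm P} => P.val) :=
          Subtype.val_injective
        have hc := aux_card m hm2
          ((u.filter (fun P => Ideal.absNorm P.val = m)).image (fun P => P.val)) ?_
        · rwa [Finset.card_image_of_injective _ hinj] at hc
        · intro P hP
          obtain ⟨P', hP', rfl⟩ := Finset.mem_image.1 hP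
          exact ⟨P'.2.1, (Finset.mem_filter.1 hP').2⟩
      exact mul_le_mul_of_nonneg_right (by exact_mod_cast hcard)
        (Real.rpow_nonneg (by positivity) _)
    calc ∑ m ∈ u.image (fun P => Ideal.absNorm P.val),
          ∑ P ∈ u.filter (fun P => Ideal.absNorm P.val = m), (Ideal.absNorm P.val : ℝ) ^ (-r)
        ≤ ∑ m ∈ u.image (fun P : {P : Ideal (𝓞 K) // P.IsPrime ∧ d < Ideal.absNorm P} =>
            Ideal.absNorm P.val), (n : ℝ) * (m : ℝ) ^ (-r) :=
          Finset.sum_le_sum key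
      _ = (n : ℝ) * ∑ m ∈ u.image (fun P : {P : Ideal (𝓞 K) // P.IsPrime ∧ d < Ideal.absNorm P} =>
            Ideal.absNorm P.val), (m : ℝ) ^ (-r) := by rw [Finset.mul_sum]
      _ ≤ (n : ℝ) * ∑' m : ℕ, (m : ℝ) ^ (-r) := by
          refine mul_le_mul_of_nonneg_left ?_ (by positivity)
          exact Summable.sum_le_tsum _ (fun m _ => Real.rpow_nonneg (by positivity) _) hsum

lemma aux_x_nonneg {r : ℝ} (P : Ideal (𝓞 K)) :
    0 ≤ (Ideal.absNorm P : ℝ) ^ (-r) :=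
  Real.rpow_nonneg (by positivity) _

lemma aux_x_le_half {r : ℝ} (hr : 1 < r) {P : Ideal (𝓞 K)}
    (h2 : 2 ≤ Ideal.absNorm P) : (Ideal.absNorm P : ℝ) ^ (-r) ≤ 1 / 2 := by
  have h2' : (2 : ℝ) ≤ (Ideal.absNorm P : ℝ) := by exact_mod_cast h2
  calc (Ideal.absNorm P : ℝ) ^ (-r) ≤ (2 : ℝ) ^ (-r) :=
        Real.rpow_le_rpow_of_nonpos (by norm_num) h2' (by linarith)
    _ ≤ (2 : ℝ) ^ (-1 : ℝ) :=
        Real.rpow_le_rpow_of_exponent_le (by norm_num) (by linarith)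
    _ = 1 / 2 := by
        rw [Real.rpow_neg_one]; norm_num

lemma aux_one_le_inv {x : ℝ} (h0 : 0 ≤ x) (h2 : x ≤ 1 / 2) : 1 ≤ (1 - x)⁻¹ := by
  have hpos : (0 : ℝ) < 1 - x := by linarith
  have h := mul_inv_cancel₀ hpos.ne'
  nlinarith [mul_nonneg (inv_nonneg.2 hpos.le) h0]

lemma aux_inv_le {x : ℝ} (h0 : 0 ≤ x) (h2 : x ≤ 1 / 2) : (1 - x)⁻¹ ≤ 1 + 2 * x := by
  have hpos : (0 : ℝ) < 1 - x := by linarith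
  rw [inv_eq_one_div, div_le_iff₀ hpos]
  nlinarith

/-- The key convergence fact: the Euler-type product converges to its supremum of
partial products. -/
lemma aux_hasProd_euler {r : ℝ} (hr : 1 < r) (d : ℕ) :
    HasProd (fun P : {P : Ideal (𝓞 K) // P.IsPrime ∧ d < Ideal.absNorm P} =>
        (1 - (Ideal.absNorm (P : Ideal (𝓞 K)) : ℝ) ^ (-r))⁻¹)
      (⨆ s : Finset {P : Ideal (𝓞 K) // P.IsPrime ∧ d < Ideal.absNorm P},
        ∏ P ∈ s, (1 - (Ideal.absNorm (P : Ideal (𝓞 K)) : ℝ) ^ (-r))⁻¹) ∧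
      BddAbove (Set.range fun s : Finset {P : Ideal (𝓞 K) // P.IsPrime ∧ d < Ideal.absNorm P} =>
        ∏ P ∈ s, (1 - (Ideal.absNorm (P : Ideal (𝓞 K)) : ℝ) ^ (-r))⁻¹) := by
  set x : {P : Ideal (𝓞 K) // P.IsPrime ∧ d < Ideal.absNorm P} → ℝ :=
    fun P => (Ideal.absNorm P.val : ℝ) ^ (-r) with hx
  have hx0 : ∀ P, 0 ≤ x P := fun P => Real.rpow_nonneg (by positivity) _
  have hxh : ∀ P, x P ≤ 1 / 2 := fun P => aux_x_le_half hr (aux_two' P)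
  have h1 : ∀ P, 1 ≤ (1 - x P)⁻¹ := fun P => aux_one_le_inv (hx0 P) (hxh P)
  have hsum := aux_summable (K := K) hr d
  refine aux_hasProd _ h1 (Real.exp (2 * ∑' P, x P)) ?_
  intro s
  calc ∏ P ∈ s, (1 - x P)⁻¹
      ≤ ∏ P ∈ s, Real.exp (2 * x P) := by
        refine Finset.prod_le_prod (fun P _ => ?_) (fun P _ => ?_)
        · exact le_trans zero_le_one (h1 P)
        · calc (1 - x P)⁻¹ ≤ 1 + 2 * x P := aux_inv_le (hx0 P) (hxh P)
            _ ≤ Real.exp (2 * x P) := by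
                have := Real.add_one_le_exp (2 * x P); linarith
    _ = Real.exp (∑ P ∈ s, 2 * x P) := (Real.exp_sum s _).symm
    _ ≤ Real.exp (2 * ∑' P, x P) := by
        rw [Real.exp_le_exp, ← Finset.mul_sum]
        refine mul_le_mul_of_nonneg_left ?_ (by norm_num)
        exact Summable.sum_le_tsum s (fun P _ => hx0 P) hsum

lemma aux_sum_le_of_inj {α β : Type*} (u : Finset α) (v : Finset β) (φ : α → β)
    (f : α → ℝ) (g : β → ℝ)
    (hg0 : ∀ b ∈ v, 0 ≤ g b) (hmaps : ∀ a ∈ u, φ a ∈ v)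
    (hinj : ∀ a ∈ u, ∀ a' ∈ u, φ a = φ a' → a = a')
    (hfg : ∀ a ∈ u, f a = g (φ a)) : ∑ a ∈ u, f a ≤ ∑ b ∈ v, g b := by
  classical
  calc ∑ a ∈ u, f a = ∑ a ∈ u, g (φ a) := Finset.sum_congr rfl hfg
    _ = ∑ b ∈ u.image φ, g b := (Finset.sum_image hinj).symm
    _ ≤ ∑ b ∈ v, g b := Finset.sum_le_sum_of_subset_of_nonneg
        (Finset.image_subset_iff.2 hmaps) (fun b hb _ => hg0 b hb)

lemma aux_prod_le_tprod {r : ℝ} (hr : 1 < r) (d : ℕ)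
    (u : Finset {P : Ideal (𝓞 K) // P.IsPrime ∧ d < Ideal.absNorm P}) :
    ∏ P ∈ u, (1 - (Ideal.absNorm (P : Ideal (𝓞 K)) : ℝ) ^ (-r))⁻¹ ≤
      ∏' P : {P : Ideal (𝓞 K) // P.IsPrime ∧ d < Ideal.absNorm P},
        (1 - (Ideal.absNorm (P : Ideal (𝓞 K)) : ℝ) ^ (-r))⁻¹ := by
  obtain ⟨hhp, hbdd⟩ := aux_hasProd_euler (K := K) hr d
  rw [hhp.tprod_eq]
  exact le_ciSup hbdd u

set_option maxHeartbeats 2000000 in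
lemma aux_sigma_le {r : ℝ} (hr : 1 < r) (d : ℕ) (I : Ideal (𝓞 K)) (hI : I ≠ 0)
    (hall : ∀ Q : Ideal (𝓞 K), Q.IsPrime → Q ∣ I → Q ≠ ⊥ → d < Ideal.absNorm Q) :
    sigmaK K r I ≤
      ∏' P : {P : Ideal (𝓞 K) // P.IsPrime ∧ d < Ideal.absNorm P},
        (1 - (Ideal.absNorm (P : Ideal (𝓞 K)) : ℝ) ^ (-r))⁻¹ := by
  classical
  letI : Fintype {J : Ideal (𝓞 K) // J ∣ I} := UniqueFactorizationMonoid.fintypeSubtypeDvd I hI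
  rw [sigmaK, tsum_fintype]
  set s : Finset (Ideal (𝓞 K)) := (normalizedFactors I).toFinset with hs
  have hsP : ∀ P ∈ s, P.IsPrime ∧ d < Ideal.absNorm P ∧ P ≠ ⊥ := by
    intro P hP
    have hmem : P ∈ normalizedFactors I := Multiset.mem_toFinset.1 hP
    have hprime : Prime P := prime_of_normalized_factor P hmem
    have hbot : P ≠ ⊥ := by
      have := hprime.ne_zero
      rwa [Submodule.zero_eq_bot] at this
    have hPrime : P.IsPrime := (Ideal.prime_iff_isPrime hbot).1 hprime
    exact ⟨hPrime, hall P hPrime (dvd_of_mem_normalizedFactors hmem) hbot, hbot⟩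
  have hx0 : ∀ P : Ideal (𝓞 K), (0:ℝ) ≤ (Ideal.absNorm P : ℝ) ^ (-r) :=
    fun P => Real.rpow_nonneg (by positivity) _
  have hxh : ∀ P ∈ s, (Ideal.absNorm P : ℝ) ^ (-r) ≤ 1 / 2 := by
    intro P hP
    exact aux_x_le_half hr (aux_two (hsP P hP).1 (hsP P hP).2.2)
  have hJ0 : ∀ J : {J : Ideal (𝓞 K) // J ∣ I}, J.val ≠ 0 :=
    fun J => ne_zero_of_dvd_ne_zero hI J.2
  have hle : ∀ J : {J : Ideal (𝓞 K) // J ∣ I},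
      normalizedFactors J.val ≤ normalizedFactors I :=
    fun J => (dvd_iff_normalizedFactors_le_normalizedFactors (hJ0 J) hI).1 J.2
  have stepA : ∑ J : {J : Ideal (𝓞 K) // J ∣ I}, (Ideal.absNorm (J : Ideal (𝓞 K)) : ℝ) ^ (-r)
      ≤ ∏ P ∈ s, ∑ k ∈ Finset.range ((normalizedFactors I).count P + 1),
          ((Ideal.absNorm P : ℝ) ^ (-r)) ^ k := by
    have hmem : ∀ J : {J : Ideal (𝓞 K) // J ∣ I},
        (fun P _ => (normalizedFactors J.val).count P) ∈
          s.pi (fun P => Finset.range ((normalizedFactors I).count P + 1)) := by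
      intro J
      rw [Finset.mem_pi]
      intro P hP
      rw [Finset.mem_range, Nat.lt_succ_iff]
      exact Multiset.le_iff_count.1 (hle J) P
    have hinj : ∀ J ∈ (Finset.univ : Finset {J : Ideal (𝓞 K) // J ∣ I}), ∀ J' ∈ Finset.univ,
        (fun P (_ : P ∈ s) => (normalizedFactors J.val).count P) =
          (fun P (_ : P ∈ s) => (normalizedFactors J'.val).count P) → J = J' := by
      intro J _ J' _ h
      apply Subtype.ext
      have heq : normalizedFactors J.val = normalizedFactors J'.val := by
        refine Multiset.ext.2 fun P => ?_
        by_cases hP : P ∈ s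
        · exact congrFun (congrFun h P) hP
        · rw [Multiset.count_eq_zero_of_notMem, Multiset.count_eq_zero_of_notMem]
          · intro hmem'
            exact hP (Multiset.mem_toFinset.2 (Multiset.mem_of_le (hle J') hmem'))
          · intro hmem'
            exact hP (Multiset.mem_toFinset.2 (Multiset.mem_of_le (hle J) hmem'))
      calc J.val = (normalizedFactors J.val).prod :=
            (associated_iff_eq.1 (prod_normalizedFactors (hJ0 J))).symm
        _ = (normalizedFactors J'.val).prod := by rw [heq]
        _ = J'.val := associated_iff_eq.1 (prod_normalizedFactors (hJ0 J'))
    have hterm : ∀ J : {J : Ideal (𝓞 K) // J ∣ I},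
        (Ideal.absNorm (J : Ideal (𝓞 K)) : ℝ) ^ (-r) =
          ∏ P ∈ s.attach,
            ((Ideal.absNorm P.val : ℝ) ^ (-r)) ^ ((normalizedFactors J.val).count P.val) := by
      intro J
      have h1 : ∏ P ∈ s.attach,
            ((Ideal.absNorm P.val : ℝ) ^ (-r)) ^ ((normalizedFactors J.val).count P.val)
          = ∏ P ∈ s, ((Ideal.absNorm P : ℝ) ^ (-r)) ^ ((normalizedFactors J.val).count P) :=
        Finset.prod_attach s
          (fun Q => ((Ideal.absNorm Q : ℝ) ^ (-r)) ^ ((normalizedFactors J.val).count Q))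
      rw [h1]
      have hsub : (normalizedFactors J.val).toFinset ⊆ s := by
        intro P hP
        exact Multiset.mem_toFinset.2 (Multiset.mem_of_le (hle J) (Multiset.mem_toFinset.1 hP))
      have hfact : J.val = ∏ P ∈ s, P ^ ((normalizedFactors J.val).count P) := by
        conv_lhs => rw [← associated_iff_eq.1 (prod_normalizedFactors (hJ0 J))]
        exact Finset.prod_multiset_count_of_subset _ s hsub
      conv_lhs => rw [hfact]
      rw [map_prod]
      push_cast [map_pow]
      rw [← Real.finset_prod_rpow s _ (fun P _ => by positivity) (-r)]
      refine Finset.prod_congr rfl ?_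
      intro P hP
      rw [← Real.rpow_natCast ((Ideal.absNorm P : ℝ)) ((normalizedFactors J.val).count P),
        ← Real.rpow_mul (by positivity), mul_comm, Real.rpow_mul (by positivity),
        Real.rpow_natCast]
    calc ∑ J : {J : Ideal (𝓞 K) // J ∣ I}, (Ideal.absNorm (J : Ideal (𝓞 K)) : ℝ) ^ (-r)
        ≤ ∑ p ∈ s.pi (fun P => Finset.range ((normalizedFactors I).count P + 1)),
            ∏ P ∈ s.attach, ((Ideal.absNorm P.val : ℝ) ^ (-r)) ^ (p P.val P.2) := by
          refine aux_sum_le_of_inj Finset.univ _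
            (fun J P _ => (normalizedFactors J.val).count P) _
            (fun (p : ∀ P ∈ s, ℕ) => ∏ P ∈ s.attach, ((Ideal.absNorm P.val : ℝ) ^ (-r)) ^ (p P.val P.2))
            ?_ (fun J _ => hmem J) hinj (fun J _ => hterm J)
          intro p _
          exact Finset.prod_nonneg fun P _ => pow_nonneg (hx0 _) _
      _ = ∏ P ∈ s, ∑ k ∈ Finset.range ((normalizedFactors I).count P + 1),
            ((Ideal.absNorm P : ℝ) ^ (-r)) ^ k :=
          (Finset.prod_sum s _ (fun P k => ((Ideal.absNorm P : ℝ) ^ (-r)) ^ k)).symm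
  have stepB : ∏ P ∈ s, ∑ k ∈ Finset.range ((normalizedFactors I).count P + 1),
        ((Ideal.absNorm P : ℝ) ^ (-r)) ^ k
      ≤ ∏ P ∈ s, (1 - (Ideal.absNorm P : ℝ) ^ (-r))⁻¹ := by
    refine Finset.prod_le_prod
      (fun P _ => Finset.sum_nonneg fun k _ => pow_nonneg (hx0 P) k) ?_
    intro P hP
    have h0 := hx0 P
    have hh := hxh P hP
    have hlt : (Ideal.absNorm P : ℝ) ^ (-r) < 1 := by linarith
    calc ∑ k ∈ Finset.range ((normalizedFactors I).count P + 1),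
          ((Ideal.absNorm P : ℝ) ^ (-r)) ^ k
        ≤ ∑' k : ℕ, ((Ideal.absNorm P : ℝ) ^ (-r)) ^ k :=
          Summable.sum_le_tsum _ (fun k _ => pow_nonneg h0 k) (summable_geometric_of_lt_one h0 hlt)
      _ = (1 - (Ideal.absNorm P : ℝ) ^ (-r))⁻¹ := tsum_geometric_of_lt_one h0 hlt
  have stepC : ∏ P ∈ s, (1 - (Ideal.absNorm P : ℝ) ^ (-r))⁻¹
      ≤ ∏' P : {P : Ideal (𝓞 K) // P.IsPrime ∧ d < Ideal.absNorm P},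
          (1 - (Ideal.absNorm (P : Ideal (𝓞 K)) : ℝ) ^ (-r))⁻¹ := by
    set emb : {P : Ideal (𝓞 K) // P ∈ s} ↪
        {P : Ideal (𝓞 K) // P.IsPrime ∧ d < Ideal.absNorm P} :=
      ⟨fun P => ⟨P.val, (hsP P.val P.2).1, (hsP P.val P.2).2.1⟩,
        fun a b h => Subtype.ext (congrArg (fun x : {P : Ideal (𝓞 K) // P.IsPrime ∧ d < Ideal.absNorm P} => x.val) h)⟩ with hemb
    have hprodeq : ∏ P ∈ s, (1 - (Ideal.absNorm P : ℝ) ^ (-r))⁻¹ =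
        ∏ P ∈ s.attach.map emb, (1 - (Ideal.absNorm (P : Ideal (𝓞 K)) : ℝ) ^ (-r))⁻¹ := by
      rw [Finset.prod_map]
      exact (Finset.prod_attach s fun P => (1 - (Ideal.absNorm P : ℝ) ^ (-r))⁻¹).symm
    rw [hprodeq]
    exact aux_prod_le_tprod hr d _
  exact le_trans stepA (le_trans stepB stepC)

lemma aux_sigma_ge {r : ℝ} (hr : 1 < r) (d : ℕ) (I : Ideal (𝓞 K)) (hI : I ≠ 0)
    (Q : Ideal (𝓞 K)) (hQp : Q.IsPrime) (hQI : Q ∣ I) (hQ0 : Q ≠ ⊥)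
    (hQd : Ideal.absNorm Q ≤ d) :
    1 + (d : ℝ) ^ (-r) ≤ sigmaK K r I := by
  classical
  letI : Fintype {J : Ideal (𝓞 K) // J ∣ I} := UniqueFactorizationMonoid.fintypeSubtypeDvd I hI
  rw [sigmaK, tsum_fintype]
  set a : {J : Ideal (𝓞 K) // J ∣ I} := ⟨1, one_dvd I⟩ with ha
  set b : {J : Ideal (𝓞 K) // J ∣ I} := ⟨Q, hQI⟩ with hb
  have hne : a ≠ b := by
    intro h
    apply hQp.ne_top
    rw [← Ideal.one_eq_top]
    exact (congrArg Subtype.val h).symm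
  have hQpos : (0 : ℝ) < (Ideal.absNorm Q : ℝ) := by
    have := aux_two hQp hQ0
    positivity
  have hfa : (Ideal.absNorm (a : Ideal (𝓞 K)) : ℝ) ^ (-r) = 1 := by
    rw [ha]
    simp [Ideal.one_eq_top, Ideal.absNorm_top]
  have hfb : (d : ℝ) ^ (-r) ≤ (Ideal.absNorm (b : Ideal (𝓞 K)) : ℝ) ^ (-r) := by
    rw [hb]
    exact Real.rpow_le_rpow_of_nonpos hQpos (by exact_mod_cast hQd) (by linarith)
  calc 1 + (d : ℝ) ^ (-r)
      ≤ (Ideal.absNorm (a : Ideal (𝓞 K)) : ℝ) ^ (-r)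
        + (Ideal.absNorm (b : Ideal (𝓞 K)) : ℝ) ^ (-r) := by
        rw [hfa]; linarith
    _ = ∑ J ∈ ({a, b} : Finset {J : Ideal (𝓞 K) // J ∣ I}),
          (Ideal.absNorm (J : Ideal (𝓞 K)) : ℝ) ^ (-r) := by rw [Finset.sum_pair hne]
    _ ≤ ∑ J : {J : Ideal (𝓞 K) // J ∣ I}, (Ideal.absNorm (J : Ideal (𝓞 K)) : ℝ) ^ (-r) :=
        Finset.sum_le_sum_of_subset_of_nonneg (Finset.subset_univ _)
          (fun J _ _ => Real.rpow_nonneg (by positivity) _)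

end Aux

/-- If `d` is an `r`-mighty norm of `K`, then no value `σ_{r,K}(I)` lies in the open interval
`(∏_{N(𝔭) > d} (1 − N(𝔭)^{-r})⁻¹, 1 + d^{-r})`: if some prime `𝔮` with `N(𝔮) ≤ d` divides
`I` then `σ_{r,K}(I) ≥ 1 + d^{-r}`, and otherwise
`σ_{r,K}(I) ≤ ∏_{N(𝔭) > d} (1 − N(𝔭)^{-r})⁻¹`. -/
theorem stmt17 (r : ℝ) (hr : 1 < r) (K : Type*) [Field K] [NumberField K]
    (d : ℕ) (hd : IsMightyNorm K r d)
    (I : Ideal (𝓞 K)) (hI : I ≠ 0) :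
    sigmaK K r I ∉ Set.Ioo
      (∏' P : {P : Ideal (𝓞 K) // P.IsPrime ∧ d < Ideal.absNorm P},
        (1 - (Ideal.absNorm (P : Ideal (𝓞 K)) : ℝ) ^ (-r))⁻¹)
      (1 + (d : ℝ) ^ (-r)) ∧
    ((∃ Q : Ideal (𝓞 K), Q.IsPrime ∧ Q ∣ I ∧ Q ≠ ⊥ ∧ Ideal.absNorm Q ≤ d) →
      1 + (d : ℝ) ^ (-r) ≤ sigmaK K r I) ∧
    ((¬ ∃ Q : Ideal (𝓞 K), Q.IsPrime ∧ Q ∣ I ∧ Q ≠ ⊥ ∧ Ideal.absNorm Q ≤ d) →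
      sigmaK K r I ≤
        ∏' P : {P : Ideal (𝓞 K) // P.IsPrime ∧ d < Ideal.absNorm P},
          (1 - (Ideal.absNorm (P : Ideal (𝓞 K)) : ℝ) ^ (-r))⁻¹) := by
  have hge : (∃ Q : Ideal (𝓞 K), Q.IsPrime ∧ Q ∣ I ∧ Q ≠ ⊥ ∧ Ideal.absNorm Q ≤ d) →
      1 + (d : ℝ) ^ (-r) ≤ sigmaK K r I := by
    rintro ⟨Q, hQp, hQI, hQ0, hQd⟩
    exact aux_sigma_ge hr d I hI Q hQp hQI hQ0 hQd
  have hle : (¬ ∃ Q : Ideal (𝓞 K), Q.IsPrime ∧ Q ∣ I ∧ Q ≠ ⊥ ∧ Ideal.absNorm Q ≤ d) →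
      sigmaK K r I ≤
        ∏' P : {P : Ideal (𝓞 K) // P.IsPrime ∧ d < Ideal.absNorm P},
          (1 - (Ideal.absNorm (P : Ideal (𝓞 K)) : ℝ) ^ (-r))⁻¹ := by
    intro h
    refine aux_sigma_le hr d I hI ?_
    intro Q hQp hQI hQ0
    by_contra hlt
    exact h ⟨Q, hQp, hQI, hQ0, le_of_not_gt hlt⟩
  refine ⟨?_, hge, hle⟩
  rintro ⟨h1, h2⟩
  by_cases h : ∃ Q : Ideal (𝓞 K), Q.IsPrime ∧ Q ∣ I ∧ Q ≠ ⊥ ∧ Ideal.absNorm Q ≤ d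
  · exact absurd h2 (not_lt.2 (hge h))
  · exact absurd h1 (not_lt.2 (hle h))
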